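/- Let R be a finite commutative local ring with maximal ideal M. Then |GL_n(R)| = |R|^{n(n-1)/2} · ∏_{i=0}^{n-1} (|R|^{n-i} − |M|^{n-i}). -/

import Mathlib

open IsLocalRing Matrix Finset

set_option linter.unusedSectionVars false

lemma card_GL_arith (κ m n : ℕ) :
    m ^ (n * n) * ∏ i ∈ range n, (κ ^ n - κ ^ i) =
      (κ * m) ^ (n * (n - 1) / 2) *
        ∏ i ∈ range n, ((κ * m) ^ (n - i) - m ^ (n - i)) := by
  have h1 : ∀ i ∈ range n, κ ^ n - κ ^ i = κ ^ i * (κ ^ (n - i) - 1) := by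
    intro i hi
    rw [Nat.mul_sub, mul_one, ← pow_add, Nat.add_sub_cancel' (mem_range.1 hi).le]
  have h2 : ∀ i ∈ range n, (κ * m) ^ (n - i) - m ^ (n - i)
      = m ^ (n - i) * (κ ^ (n - i) - 1) := by
    intro i _
    rw [Nat.mul_sub, mul_one, mul_pow, mul_comm (κ ^ (n - i))]
  have hsum : ∑ i ∈ range n, (n - i) = n * (n - 1) / 2 + n := by
    have := Finset.sum_range_reflect (fun j => n - j) n
    rw [← this]
    have : ∀ j ∈ range n, n - (n - 1 - j) = j + 1 := by
      intro j hj; have := mem_range.1 hj; omega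
    rw [Finset.sum_congr rfl this, Finset.sum_add_distrib, Finset.sum_range_id,
      Finset.sum_const, card_range, smul_eq_mul, mul_one]
  have heven : Even (n * (n - 1)) := by
    rcases Nat.even_or_odd n with h | h
    · exact h.mul_right _
    · rcases n with _ | k
      · simp
      · exact (Nat.Odd.sub_odd h odd_one).mul_left _
  have h2A : n * (n - 1) / 2 * 2 = n * (n - 1) := Nat.div_mul_cancel heven.two_dvd
  have hx : n * n = n * (n - 1) + n := by
    rcases n with _ | k
    · simp
    · simp only [Nat.succ_sub_one]; ring
  have hnn : n * n = n * (n - 1) / 2 + (n * (n - 1) / 2 + n) := by omega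
  rw [Finset.prod_congr rfl h1, Finset.prod_congr rfl h2, Finset.prod_mul_distrib,
    Finset.prod_mul_distrib, Finset.prod_pow_eq_pow_sum, Finset.prod_pow_eq_pow_sum,
    Finset.sum_range_id, hsum, mul_pow, hnn, pow_add, pow_add]
  ring

section
variable {R : Type*} [CommRing R] [IsLocalRing R] [Fintype R] (n : ℕ)

local notation "K" => ResidueField R

instance : Finite (ResidueField R) := Finite.of_surjective (residue R) residue_surjective
noncomputable instance : Fintype (ResidueField R) := Fintype.ofFinite _

/-- reduction map -/
noncomputable def redGL : GL (Fin n) R →* GL (Fin n) K :=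
  Matrix.GeneralLinearGroup.map (residue R)

lemma redGL_surjective : Function.Surjective (redGL (R := R) n) := by
  intro y
  have : IsLocalHom (residue R) := inferInstance
  choose f hf using residue_surjective (R := R)
  set A : Matrix (Fin n) (Fin n) R := Matrix.of fun i j => f ((y : Matrix (Fin n) (Fin n) K) i j)
  have hmap : (residue R).mapMatrix A = (y : Matrix (Fin n) (Fin n) K) := by
    ext i j; simp [A, hf]
  have hdet : IsUnit A.det := by
    apply isUnit_of_map_unit (residue R)
    rw [RingHom.map_det, hmap]
    exact (Matrix.isUnit_iff_isUnit_det _).1 y.isUnit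
  refine ⟨Matrix.GeneralLinearGroup.mk'' A hdet, ?_⟩
  apply Units.ext
  show (residue R).mapMatrix _ = _
  exact hmap

lemma residue_matrix_one (i j : Fin n) :
    residue R ((1 : Matrix (Fin n) (Fin n) R) i j) = (1 : Matrix (Fin n) (Fin n) K) i j := by
  simp [Matrix.one_apply, apply_ite (residue R)]

lemma mem_ker_redGL_iff (g : GL (Fin n) R) :
    g ∈ (redGL (R := R) n).ker ↔
      ∀ i j, (g : Matrix (Fin n) (Fin n) R) i j - (1 : Matrix (Fin n) (Fin n) R) i j
        ∈ maximalIdeal R := by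
  rw [MonoidHom.mem_ker]
  rw [Units.ext_iff]
  show (residue R).mapMatrix (g : Matrix (Fin n) (Fin n) R) = 1 ↔ _
  rw [← Matrix.ext_iff]
  refine forall₂_congr fun i j => ?_
  rw [show ((residue R).mapMatrix (g : Matrix (Fin n) (Fin n) R)) i j
      = residue R ((g : Matrix (Fin n) (Fin n) R) i j) from rfl, ← residue_matrix_one n i j,
    ← sub_eq_zero, ← map_sub]
  exact Ideal.Quotient.eq_zero_iff_mem

lemma card_ker_redGL :
    Nat.card (redGL (R := R) n).ker = Nat.card (maximalIdeal R) ^ (n * n) := by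
  have hmap1 : ∀ B : Fin n → Fin n → maximalIdeal R,
      (residue R).mapMatrix ((1 : Matrix (Fin n) (Fin n) R)
        + Matrix.of fun i j => (B i j : R)) = 1 := by
    intro B
    ext i j
    show residue R ((1 : Matrix (Fin n) (Fin n) R) i j + (B i j : R))
      = (1 : Matrix (Fin n) (Fin n) K) i j
    have hz : residue R ((B i j : R)) = 0 := Ideal.Quotient.eq_zero_iff_mem.2 (B i j).2
    rw [map_add, hz, add_zero, residue_matrix_one]
  have key : ∀ B : Fin n → Fin n → maximalIdeal R,
      IsUnit ((1 : Matrix (Fin n) (Fin n) R) + Matrix.of fun i j => (B i j : R)).det := by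
    intro B
    have : IsLocalHom (residue R) := inferInstance
    apply isUnit_of_map_unit (residue R)
    rw [RingHom.map_det, hmap1]
    simp
  have e : (redGL (R := R) n).ker ≃ (Fin n → Fin n → maximalIdeal R) :=
    { toFun := fun g => fun i j =>
        ⟨(g.1 : Matrix (Fin n) (Fin n) R) i j - (1 : Matrix (Fin n) (Fin n) R) i j,
          (mem_ker_redGL_iff n g.1).1 g.2 i j⟩
      invFun := fun B =>
        ⟨Matrix.GeneralLinearGroup.mk'' _ (key B), (mem_ker_redGL_iff n _).2 (fun i j => by
          show ((1 : Matrix (Fin n) (Fin n) R) + Matrix.of fun i j => (B i j : R)) i j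
            - (1 : Matrix (Fin n) (Fin n) R) i j ∈ maximalIdeal R
          rw [Matrix.add_apply, Matrix.of_apply, add_sub_cancel_left]
          exact (B i j).2)⟩
      left_inv := fun g => by
        apply Subtype.ext
        apply Units.ext
        apply Matrix.ext
        intro i j
        show (1 : Matrix (Fin n) (Fin n) R) i j
            + ((g.1 : Matrix (Fin n) (Fin n) R) i j - (1 : Matrix (Fin n) (Fin n) R) i j)
          = (g.1 : Matrix (Fin n) (Fin n) R) i j
        ring
      right_inv := fun B => by
        funext i j
        apply Subtype.ext
        show ((1 : Matrix (Fin n) (Fin n) R) i j + (B i j : R))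
          - (1 : Matrix (Fin n) (Fin n) R) i j = (B i j : R)
        ring }
  rw [Nat.card_congr e]
  simp [Nat.card_pi, Finset.prod_const, ← pow_mul]

end

theorem card_GL_local_ring {R : Type*} [CommRing R] [IsLocalRing R] [Fintype R] (n : ℕ) :
    Nat.card (GL (Fin n) R) =
      Nat.card R ^ (n * (n - 1) / 2) *
        ∏ i ∈ Finset.range n,
          (Nat.card R ^ (n - i) - Nat.card (IsLocalRing.maximalIdeal R) ^ (n - i)) := by
  have hR : Nat.card R = Nat.card (ResidueField R) * Nat.card (maximalIdeal R) :=
    ((Submodule.card_eq_card_quotient_mul_card (maximalIdeal R)).trans (mul_comm _ _))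
  have hcard : Nat.card (GL (Fin n) R)
      = Nat.card (GL (Fin n) (ResidueField R)) * Nat.card (maximalIdeal R) ^ (n * n) := by
    rw [Subgroup.card_eq_card_quotient_mul_card_subgroup (redGL (R := R) n).ker,
      card_ker_redGL,
      Nat.card_congr (QuotientGroup.quotientKerEquivOfSurjective _
        (redGL_surjective (R := R) n)).toEquiv]
  have hGLK : Nat.card (GL (Fin n) (ResidueField R))
      = ∏ i ∈ range n, (Nat.card (ResidueField R) ^ n - Nat.card (ResidueField R) ^ i) := by
    rw [Matrix.card_GL_field, ← Fin.prod_univ_eq_prod_range]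
    simp [Nat.card_eq_fintype_card]
  rw [hcard, hGLK, hR, mul_comm]
  exact card_GL_arith _ _ n
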